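/- (Deterministic form of Theorem 2.3: strong consistency of soft AIC.) Assume k ≥ 1 and let ξ_k := (ψ_σ(λ_k)² − 4σ²)/(2σ²). Let ξ̂(N) be a sequence of reals such that liminf_{N→∞} ξ̂(N) > 0 and limsup_{N→∞} ξ̂(N) ≤ ξ_k. Define AIC_j(N) = GAIC^2_j(N) and the soft minimizer k̂_soft(N) := min{ j ∈ {0,…,q} : (1/N)·(AIC_j(N) − min_{0 ≤ j' ≤ q} AIC_{j'}(N)) < ξ̂(N)/3 }. Then there exists N₀ such that k̂_soft(N) = k for all N ≥ N₀. -/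

import Mathlib

open Filter

/-- For `σ > 0`, `ψ_σ(x) = x + σ²/x`. -/
noncomputable def psi (σ x : ℝ) : ℝ := x + σ ^ 2 / x

/-- The score `GAIC^γ_j(N) = (N/(2σ²)) Σ_{i=j+1}^{q} ℓ_i(N)² + γ(Nj − j(j−1)/2)`. -/
noncomputable def GAIC (σ : ℝ) (q : ℕ) (ℓ : ℕ → ℕ → ℝ) (γ : ℝ) (j N : ℕ) : ℝ :=
  ((N : ℝ) / (2 * σ ^ 2)) * ∑ i ∈ Finset.Icc (j + 1) q, (ℓ i N) ^ 2
    + γ * ((N : ℝ) * (j : ℝ) - (j : ℝ) * ((j : ℝ) - 1) / 2)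

lemma psi_gt_two_sigma (σ x : ℝ) (hσ : 0 < σ) (hx : σ < x) : 2 * σ < psi σ x := by
  have hx0 : 0 < x := hσ.trans hx
  unfold psi
  rw [← sub_lt_iff_lt_add', lt_div_iff₀ hx0]
  nlinarith [sq_nonneg (x - σ)]

lemma psi_mono (σ a b : ℝ) (hσ : 0 < σ) (ha : σ < a) (hab : a ≤ b) :
    psi σ a ≤ psi σ b := by
  have ha0 : 0 < a := hσ.trans ha
  have hb0 : 0 < b := lt_of_lt_of_le ha0 hab
  unfold psi
  have h : σ ^ 2 / a - σ ^ 2 / b = σ ^ 2 * (b - a) / (a * b) := by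
    field_simp
  have h2 : σ ^ 2 / a - σ ^ 2 / b ≤ b - a := by
    rw [h, div_le_iff₀ (by positivity)]
    nlinarith [mul_nonneg (sub_nonneg.2 hab) (by nlinarith : (0:ℝ) ≤ a * b - σ ^ 2)]
  linarith

/-- Limiting value of `ℓ i N`. -/
noncomputable def Llim (σ : ℝ) (lam : ℕ → ℝ) (k i : ℕ) : ℝ :=
  if i ≤ k then psi σ (lam i) else 2 * σ

/-- Limiting value of the tail sum. -/
noncomputable def Tfun (σ : ℝ) (lam : ℕ → ℝ) (k q j : ℕ) : ℝ :=
  ∑ i ∈ Finset.Icc (j + 1) q, (Llim σ lam k i) ^ 2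

/-- Limiting value of the normalized difference of scores. -/
noncomputable def Lfun (σ : ℝ) (lam : ℕ → ℝ) (k q j : ℕ) : ℝ :=
  (1 / (2 * σ ^ 2)) * (Tfun σ lam k q j - Tfun σ lam k q k) + (2 * (j:ℝ) - 2 * (k:ℝ))

theorem soft_aic_strong_consistency
    (σ : ℝ) (hσ : 0 < σ) (q k : ℕ) (hq : 1 ≤ q) (hkq : k ≤ q)
    (lam : ℕ → ℝ)
    (hlam_anti : ∀ i j : ℕ, 1 ≤ i → i ≤ j → j ≤ k → lam j ≤ lam i)
    (hlam_gt : ∀ i : ℕ, 1 ≤ i → i ≤ k → σ < lam i)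
    (ℓ : ℕ → ℕ → ℝ)
    (hℓ_anti : ∀ N i j : ℕ, 1 ≤ i → i ≤ j → j ≤ q → ℓ j N ≤ ℓ i N)
    (hspike : ∀ i : ℕ, 1 ≤ i → i ≤ k →
      Tendsto (fun N : ℕ => ℓ i N) atTop (nhds (psi σ (lam i))))
    (hbulk : ∀ i : ℕ, k < i → i ≤ q →
      Tendsto (fun N : ℕ => ℓ i N) atTop (nhds (2 * σ)))
    (hk : 1 ≤ k) (xihat : ℕ → ℝ)
    (hliminf : ∃ c : ℝ, 0 < c ∧ ∀ᶠ N in atTop, c ≤ xihat N)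
    (hlimsup : ∀ ε : ℝ, 0 < ε → ∀ᶠ N in atTop,
      xihat N ≤ ((psi σ (lam k)) ^ 2 - 4 * σ ^ 2) / (2 * σ ^ 2) + ε) :
    ∃ N₀ : ℕ, ∀ N ≥ N₀,
      sInf {j : ℕ | j ≤ q ∧
        (1 / (N : ℝ)) * (GAIC σ q ℓ 2 j N -
          (Finset.range (q + 1)).inf' (Finset.nonempty_range_iff.mpr (Nat.succ_ne_zero q))
            (fun j' => GAIC σ q ℓ 2 j' N)) < xihat N / 3} = k := by
  classical
  have hσ2 : (0:ℝ) < 2 * σ ^ 2 := by positivity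
  obtain ⟨ψk, hψkdef⟩ : ∃ x : ℝ, x = psi σ (lam k) := ⟨_, rfl⟩
  have hψk_gt : 2 * σ < ψk := by
    rw [hψkdef]; exact psi_gt_two_sigma σ (lam k) hσ (hlam_gt k hk le_rfl)
  obtain ⟨ξk, hξkdef⟩ : ∃ x : ℝ, x = (ψk ^ 2 - 4 * σ ^ 2) / (2 * σ ^ 2) := ⟨_, rfl⟩
  have hξk : 0 < ξk := by
    rw [hξkdef]; apply div_pos _ hσ2; nlinarith
  obtain ⟨c, hc, hcEv⟩ := hliminf
  obtain ⟨δ, hδdef⟩ : ∃ x : ℝ, x = min c ξk / 4 := ⟨_, rfl⟩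
  have hδ : 0 < δ := by rw [hδdef]; exact div_pos (lt_min hc hξk) (by norm_num)
  have hδc : δ ≤ c / 4 := by
    rw [hδdef]; gcongr; exact min_le_left _ _
  have hδξ : δ ≤ ξk / 4 := by
    rw [hδdef]; gcongr; exact min_le_right _ _
  -- convergence of each eigenvalue
  have hconv : ∀ i, 1 ≤ i → i ≤ q →
      Tendsto (fun N : ℕ => ℓ i N) atTop (nhds (Llim σ lam k i)) := by
    intro i h1 hiq
    unfold Llim
    split_ifs with h
    · exact hspike i h1 h
    · exact hbulk i (lt_of_not_ge h) hiq
  have hS : ∀ j : ℕ, Tendsto (fun N : ℕ => ∑ i ∈ Finset.Icc (j + 1) q, (ℓ i N) ^ 2)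
      atTop (nhds (Tfun σ lam k q j)) := by
    intro j
    unfold Tfun
    apply tendsto_finset_sum
    intro i hi
    rw [Finset.mem_Icc] at hi
    exact (hconv i (le_trans (Nat.le_add_left 1 j) hi.1) hi.2).pow 2
  -- convergence of the normalized differences
  have hD : ∀ j : ℕ, Tendsto
      (fun N : ℕ => (1 / (N : ℝ)) * (GAIC σ q ℓ 2 j N - GAIC σ q ℓ 2 k N))
      atTop (nhds (Lfun σ lam k q j)) := by
    intro j
    have key : Tendsto (fun N : ℕ =>
        (1 / (2 * σ ^ 2)) * ((∑ i ∈ Finset.Icc (j + 1) q, (ℓ i N) ^ 2)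
          - ∑ i ∈ Finset.Icc (k + 1) q, (ℓ i N) ^ 2) + (2 * (j:ℝ) - 2 * (k:ℝ))
        + ((k:ℝ) * ((k:ℝ) - 1) - (j:ℝ) * ((j:ℝ) - 1)) * (1 / (N:ℝ)))
        atTop (nhds (Lfun σ lam k q j)) := by
      have h1 := (((hS j).sub (hS k)).const_mul (1 / (2 * σ ^ 2))).add_const
        (2 * (j:ℝ) - 2 * (k:ℝ))
      have h2 := tendsto_one_div_atTop_nhds_zero_nat.const_mul
        ((k:ℝ) * ((k:ℝ) - 1) - (j:ℝ) * ((j:ℝ) - 1))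
      have h3 := h1.add h2
      rw [mul_zero, add_zero] at h3
      exact h3
    refine Tendsto.congr' ?_ key
    filter_upwards [eventually_ge_atTop 1] with N hN
    have hN0 : (N:ℝ) ≠ 0 := Nat.cast_ne_zero.mpr (by omega)
    unfold GAIC
    field_simp
    ring
  -- L j = 0 for k ≤ j ≤ q
  have hLzero : ∀ j, k ≤ j → j ≤ q → Lfun σ lam k q j = 0 := by
    intro j hkj hjq
    have hsplit : (∑ i ∈ Finset.Ioc k j, (Llim σ lam k i) ^ 2) + Tfun σ lam k q j
        = Tfun σ lam k q k := by
      unfold Tfun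
      rw [Finset.Icc_add_one_left_eq_Ioc, Finset.Icc_add_one_left_eq_Ioc]
      exact Finset.sum_Ioc_consecutive _ hkj hjq
    have hsum : (∑ i ∈ Finset.Ioc k j, (Llim σ lam k i) ^ 2)
        = ((j:ℝ) - (k:ℝ)) * (2 * σ) ^ 2 := by
      rw [Finset.sum_congr rfl (fun i hi => ?_), Finset.sum_const, Nat.card_Ioc,
        nsmul_eq_mul, Nat.cast_sub hkj]
      have h := (Finset.mem_Ioc.mp hi).1
      simp [Llim, Nat.not_le.mpr h]
    have hTjk : Tfun σ lam k q j - Tfun σ lam k q k = -(((j:ℝ) - (k:ℝ)) * (2 * σ) ^ 2) := by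
      rw [← hsplit, hsum]; ring
    unfold Lfun
    rw [hTjk]
    field_simp
    ring
  -- L j ≥ ξk for j < k
  have hLpos : ∀ j, j < k → ξk ≤ Lfun σ lam k q j := by
    intro j hjk
    have hjk' : j ≤ k := hjk.le
    have hsplit : (∑ i ∈ Finset.Ioc j k, (Llim σ lam k i) ^ 2) + Tfun σ lam k q k
        = Tfun σ lam k q j := by
      unfold Tfun
      rw [Finset.Icc_add_one_left_eq_Ioc, Finset.Icc_add_one_left_eq_Ioc]
      exact Finset.sum_Ioc_consecutive _ hjk' hkq
    have hterm : ∀ i ∈ Finset.Ioc j k, ψk ^ 2 ≤ (Llim σ lam k i) ^ 2 := by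
      intro i hi
      obtain ⟨hji, hik⟩ := Finset.mem_Ioc.mp hi
      have h1i : 1 ≤ i := Nat.one_le_iff_ne_zero.mpr (by omega)
      have hle : ψk ≤ psi σ (lam i) := by
        rw [hψkdef]
        exact psi_mono σ (lam k) (lam i) hσ (hlam_gt k hk le_rfl)
          (hlam_anti i k h1i hik le_rfl)
      have h0 : 0 ≤ ψk := by nlinarith
      simp only [Llim, if_pos hik]
      exact pow_le_pow_left₀ h0 hle 2
    have hsum_ge : ((k:ℝ) - (j:ℝ)) * ψk ^ 2
        ≤ ∑ i ∈ Finset.Ioc j k, (Llim σ lam k i) ^ 2 := by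
      have h := Finset.card_nsmul_le_sum (Finset.Ioc j k)
        (fun i => (Llim σ lam k i) ^ 2) (ψk ^ 2) hterm
      rwa [Nat.card_Ioc, nsmul_eq_mul, Nat.cast_sub hjk'] at h
    have hm : (1:ℝ) ≤ (k:ℝ) - (j:ℝ) := by
      have : (j:ℝ) + 1 ≤ (k:ℝ) := by exact_mod_cast hjk
      linarith
    have hTjk : ((k:ℝ) - (j:ℝ)) * ψk ^ 2 ≤ Tfun σ lam k q j - Tfun σ lam k q k := by
      rw [← hsplit]; linarith [hsum_ge]
    have hmul : ξk * (2 * σ ^ 2) ≤ Lfun σ lam k q j * (2 * σ ^ 2) → ξk ≤ Lfun σ lam k q j :=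
      fun h => le_of_mul_le_mul_right h hσ2
    apply hmul
    have e1 : ξk * (2 * σ ^ 2) = ψk ^ 2 - 4 * σ ^ 2 := by
      rw [hξkdef]; field_simp
    have e2 : Lfun σ lam k q j * (2 * σ ^ 2)
        = (Tfun σ lam k q j - Tfun σ lam k q k) + (2 * (j:ℝ) - 2 * (k:ℝ)) * (2 * σ ^ 2) := by
      unfold Lfun; field_simp
    rw [e1, e2]
    have hA : 0 ≤ ψk ^ 2 - 4 * σ ^ 2 := by nlinarith
    nlinarith [hTjk, hm, hA, hσ2]
  have hLnonneg : ∀ j, j ≤ q → 0 ≤ Lfun σ lam k q j := by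
    intro j hjq
    rcases lt_or_ge j k with h | h
    · exact le_trans hξk.le (hLpos j h)
    · exact (hLzero j h hjq).ge
  -- eventual bounds
  have hEvD : ∀ᶠ N : ℕ in atTop, ∀ j ∈ Finset.range (q + 1),
      |(1 / (N:ℝ)) * (GAIC σ q ℓ 2 j N - GAIC σ q ℓ 2 k N) - Lfun σ lam k q j| < δ := by
    rw [Filter.eventually_all_finset]
    intro j _
    have h := (hD j).eventually (Metric.ball_mem_nhds (Lfun σ lam k q j) hδ)
    filter_upwards [h] with N hN
    simpa [Real.dist_eq] using hN
  have hEvξ' := hlimsup (ξk / 4) (by positivity)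
  have hEvξ : ∀ᶠ N : ℕ in atTop, xihat N ≤ ξk + ξk / 4 := by
    filter_upwards [hEvξ'] with N hN
    rw [← hψkdef] at hN
    linarith [hN, hξkdef.le, hξkdef.ge]
  have main : ∀ᶠ N : ℕ in atTop,
      sInf {j : ℕ | j ≤ q ∧
        (1 / (N : ℝ)) * (GAIC σ q ℓ 2 j N -
          (Finset.range (q + 1)).inf' (Finset.nonempty_range_iff.mpr (Nat.succ_ne_zero q))
            (fun j' => GAIC σ q ℓ 2 j' N)) < xihat N / 3} = k := by
    filter_upwards [hEvD, hcEv, hEvξ] with N hDN hcN hξN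
    set M : ℝ := (Finset.range (q + 1)).inf'
      (Finset.nonempty_range_iff.mpr (Nat.succ_ne_zero q))
      (fun j' => GAIC σ q ℓ 2 j' N) with hMdef
    obtain ⟨j₀, hj₀mem', hj₀⟩ := Finset.exists_mem_eq_inf'
      (Finset.nonempty_range_iff.mpr (Nat.succ_ne_zero q)) (fun j' => GAIC σ q ℓ 2 j' N)
    have hMj₀ : M = GAIC σ q ℓ 2 j₀ N := hj₀
    have hj₀mem : j₀ ∈ Finset.range (q + 1) := hj₀mem'
    have hMle : M ≤ GAIC σ q ℓ 2 k N :=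
      Finset.inf'_le _ (Finset.mem_range.mpr (Nat.lt_succ_of_le hkq))
    clear_value M
    clear hMdef hj₀
    -- E := (1/N)(AIC_k - M) satisfies 0 ≤ E < δ
    have hE_lt : (1 / (N:ℝ)) * (GAIC σ q ℓ 2 k N - M) < δ := by
      have habs := hDN j₀ hj₀mem
      have hL0 := hLnonneg j₀ (Nat.lt_succ_iff.mp (Finset.mem_range.mp hj₀mem))
      have h1 : (1 / (N:ℝ)) * (GAIC σ q ℓ 2 k N - M)
          = -((1 / (N:ℝ)) * (GAIC σ q ℓ 2 j₀ N - GAIC σ q ℓ 2 k N)) := by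
        rw [hMj₀]; ring
      rw [h1]
      rw [abs_lt] at habs
      linarith [habs.1]
    have hE_nonneg : 0 ≤ (1 / (N:ℝ)) * (GAIC σ q ℓ 2 k N - M) := by
      have h1N : (0:ℝ) ≤ 1 / (N:ℝ) := by positivity
      have h2 := sub_nonneg.mpr hMle
      exact mul_nonneg h1N h2
    -- the bound at j = k
    have hFk : (1 / (N:ℝ)) * (GAIC σ q ℓ 2 k N - M) < xihat N / 3 := by
      have hδc3 : δ < c / 3 := lt_of_le_of_lt hδc (by linarith)
      calc (1 / (N:ℝ)) * (GAIC σ q ℓ 2 k N - M) < δ := hE_lt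
        _ < c / 3 := hδc3
        _ ≤ xihat N / 3 := by linarith
    -- no element below k
    have hnlt : ∀ m, m ≤ q →
        (1 / (N:ℝ)) * (GAIC σ q ℓ 2 m N - M) < xihat N / 3 → k ≤ m := by
      intro m hmq hmlt
      by_contra hmk
      push_neg at hmk
      have habs := hDN m (Finset.mem_range.mpr (Nat.lt_succ_of_le hmq))
      rw [abs_lt] at habs
      have hLm := hLpos m hmk
      have hDm : ξk - δ < (1 / (N:ℝ)) * (GAIC σ q ℓ 2 m N - GAIC σ q ℓ 2 k N) := by
        linarith [habs.1]
      have hFm : (1 / (N:ℝ)) * (GAIC σ q ℓ 2 m N - M)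
          = (1 / (N:ℝ)) * (GAIC σ q ℓ 2 m N - GAIC σ q ℓ 2 k N)
            + (1 / (N:ℝ)) * (GAIC σ q ℓ 2 k N - M) := by ring
      rw [hFm] at hmlt
      have hxi3 : xihat N / 3 ≤ ξk / 3 + ξk / 12 := by linarith
      linarith [hE_nonneg, hDm, hδξ]
    refine le_antisymm (Nat.sInf_le ⟨hkq, hFk⟩) ?_
    have hne : {j : ℕ | j ≤ q ∧ (1 / (N:ℝ)) * (GAIC σ q ℓ 2 j N - M) < xihat N / 3}.Nonempty :=
      ⟨k, hkq, hFk⟩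
    obtain ⟨hq', hlt'⟩ := Nat.sInf_mem hne
    exact hnlt _ hq' hlt'
  exact eventually_atTop.mp main
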